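/- Let m be a positive divisor of s. Suppose α_1, …, α_k ∈ F_{q^s} satisfy α_i^{q^m} = α_i for all i (so each α_i lies in the subfield of order q^m), and let A_1, …, A_k ∈ M_n(F_{q^s}). Then rank( Σ_{i=1}^k α_i · φ̄(A_i) ) = (s/m) · Σ_{j=0}^{m−1} rank( Σ_{i=1}^k α_i^{q^j} · A_i ), where φ̄(A_i) is viewed over F_{q^s} via F_q ⊆ F_{q^s} and all ranks are taken over F_{q^s}. -/

import Mathlib

set_option linter.unusedSectionVars false
set_option maxHeartbeats 1000000

open Matrix Finset Module Kronecker

section AuxRank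

variable {L : Type*} [Field L] [Fintype L]

lemma aux_finrank_eq_of_card_eq {V W : Type*} [AddCommGroup V] [Module L V] [Finite V]
    [AddCommGroup W] [Module L W] [Finite W] (h : Nat.card V = Nat.card W) :
    Module.finrank L V = Module.finrank L W := by
  letI : Fintype V := Fintype.ofFinite V
  letI : Fintype W := Fintype.ofFinite W
  rw [Nat.card_eq_fintype_card, Nat.card_eq_fintype_card,
    card_eq_pow_finrank (K := L) (V := V), card_eq_pow_finrank (K := L) (V := W)] at h
  exact Nat.pow_right_injective Fintype.one_lt_card h

lemma aux_rank_add_ker {ι κ : Type*} [Fintype ι] [Fintype κ] (M : Matrix ι κ L) :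
    M.rank + Module.finrank L (LinearMap.ker M.mulVecLin) = Fintype.card κ := by
  rw [Matrix.rank, LinearMap.finrank_range_add_finrank_ker M.mulVecLin]
  simp

lemma aux_mulVec_map (e : L ≃+* L) {ι κ : Type*} [Fintype κ] (M : Matrix ι κ L) (v : κ → L) :
    (M.map e) *ᵥ (fun i => e (v i)) = fun j => e ((M *ᵥ v) j) := by
  funext j
  simp [Matrix.mulVec, dotProduct, Matrix.map_apply, map_sum, _root_.map_mul]

lemma aux_rank_map {ι κ : Type*} [Fintype ι] [Fintype κ] (e : L ≃+* L) (M : Matrix ι κ L) :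
    (M.map e).rank = M.rank := by
  have h1 := aux_rank_add_ker M
  have h2 := aux_rank_add_ker (M.map ⇑e)
  have key : ∀ v : κ → L, (M.map ⇑e) *ᵥ (fun i => e (v i)) = fun j => e ((M *ᵥ v) j) :=
    aux_mulVec_map e M
  have hcard : Nat.card (LinearMap.ker M.mulVecLin) =
      Nat.card (LinearMap.ker (M.map ⇑e).mulVecLin) := by
    apply Nat.card_congr
    refine ⟨fun x => ⟨fun i => e (x.1 i), ?_⟩, fun y => ⟨fun i => e.symm (y.1 i), ?_⟩,
      fun x => ?_, fun y => ?_⟩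
    · have hx := x.2
      rw [LinearMap.mem_ker, mulVecLin_apply] at hx ⊢
      rw [key, hx]
      funext j; simp
    · have hy := y.2
      rw [LinearMap.mem_ker, mulVecLin_apply] at hy ⊢
      have h3 := key (fun i => e.symm (y.1 i))
      simp only [RingEquiv.apply_symm_apply] at h3
      rw [hy] at h3
      funext j
      have h4 := congr_fun h3 j
      exact e.injective (by simpa using h4.symm)
    · exact Subtype.ext (funext fun i => by simp)
    · exact Subtype.ext (funext fun i => by simp)
  have h5 := aux_finrank_eq_of_card_eq (L := L) hcard
  omega

lemma aux_blockDiagonal_mulVec {ι o : Type*} [Fintype ι] [Fintype o] [DecidableEq o]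
    (N : o → Matrix ι ι L) (v : ι × o → L) (i : ι) (j : o) :
    (blockDiagonal N *ᵥ v) (i, j) = ((N j) *ᵥ (fun i' => v (i', j))) i := by
  simp only [Matrix.mulVec, dotProduct, Fintype.sum_prod_type, blockDiagonal_apply]
  rw [Finset.sum_comm]
  simp [Finset.sum_ite_eq, ite_mul, zero_mul]

lemma aux_rank_blockDiagonal {ι o : Type*} [Fintype ι] [Fintype o] [DecidableEq ι] [DecidableEq o]
    (N : o → Matrix ι ι L) :
    (blockDiagonal N).rank = ∑ j, (N j).rank := by
  have h1 := aux_rank_add_ker (blockDiagonal N)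
  have h2 : ∀ j, (N j).rank + finrank L (LinearMap.ker (N j).mulVecLin) = Fintype.card ι :=
    fun j => aux_rank_add_ker _
  have hcard : Nat.card (LinearMap.ker (blockDiagonal N).mulVecLin) =
      ∏ j, Nat.card (LinearMap.ker (N j).mulVecLin) := by
    rw [← Nat.card_pi]
    apply Nat.card_congr
    refine ⟨fun x => fun j => ⟨fun i => x.1 (i, j), ?_⟩, fun y => ⟨fun p => (y p.2).1 p.1, ?_⟩,
      fun x => ?_, fun y => ?_⟩
    · have hx := x.2
      rw [LinearMap.mem_ker, mulVecLin_apply] at hx ⊢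
      funext i
      rw [← aux_blockDiagonal_mulVec N x.1 i j, hx]
      rfl
    · rw [LinearMap.mem_ker, mulVecLin_apply]
      funext ⟨i, j⟩
      rw [aux_blockDiagonal_mulVec]
      have hy := (y j).2
      rw [LinearMap.mem_ker, mulVecLin_apply] at hy
      exact congr_fun hy i
    · exact Subtype.ext rfl
    · funext j; exact Subtype.ext rfl
  have hker : finrank L (LinearMap.ker (blockDiagonal N).mulVecLin) =
      ∑ j, finrank L (LinearMap.ker (N j).mulVecLin) := by
    letI : Fintype (LinearMap.ker (blockDiagonal N).mulVecLin) := Fintype.ofFinite _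
    letI : ∀ j, Fintype (LinearMap.ker (N j).mulVecLin) := fun j => Fintype.ofFinite _
    simp only [Nat.card_eq_fintype_card] at hcard
    rw [card_eq_pow_finrank (K := L) (V := LinearMap.ker (blockDiagonal N).mulVecLin)] at hcard
    have hcard2 : (∏ j : o, Fintype.card (LinearMap.ker (N j).mulVecLin)) =
        ∏ j : o, Fintype.card L ^ finrank L (LinearMap.ker (N j).mulVecLin) :=
      Finset.prod_congr rfl fun j _ => card_eq_pow_finrank (K := L)
    rw [hcard2, Finset.prod_pow_eq_pow_sum] at hcard
    exact Nat.pow_right_injective Fintype.one_lt_card hcard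
  have h3 : ∑ j, ((N j).rank + finrank L (LinearMap.ker (N j).mulVecLin)) =
      ∑ j : o, Fintype.card ι := Finset.sum_congr rfl fun j _ => h2 j
  rw [Finset.sum_add_distrib, ← hker] at h3
  rw [Finset.sum_const, smul_eq_mul, Finset.card_univ] at h3
  rw [Fintype.card_prod, mul_comm] at h1
  omega

end AuxRank

lemma aux_moore_det {K L : Type*} [Field K] [Fintype K] [Field L] [Fintype L] [Algebra K L]
    {s : ℕ} (hs : 1 ≤ s) (b : Basis (Fin s) K L) (σ : Fin s → (L →+* L))
    (hσ : ∀ j (x : L), σ j x = x ^ (Fintype.card K) ^ (j : ℕ))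
    (hLcard : Fintype.card L = Fintype.card K ^ s) :
    IsUnit (Matrix.of (fun j r : Fin s => σ j (b r))).det := by
  set q := Fintype.card K with hq
  have hq2 : 1 < q := Fintype.one_lt_card
  rw [isUnit_iff_ne_zero]
  intro hdet
  have hdetT : (Matrix.of (fun j r : Fin s => σ j (b r)))ᵀ.det = 0 := by
    rw [Matrix.det_transpose]; exact hdet
  obtain ⟨c, hc0, hcc⟩ := Matrix.exists_mulVec_eq_zero_iff.mpr hdetT
  have hKlin : ∀ (j : Fin s) (a : K) (x : L), σ j (algebraMap K L a * x)
      = algebraMap K L a * σ j x := by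
    intro j a x
    rw [_root_.map_mul, hσ, ← _root_.map_pow, FiniteField.pow_card_pow]
  let ℓ : L →ₗ[K] L :=
    { toFun := fun x => ∑ j, c j * σ j x
      map_add' := fun x y => by
        simp only [_root_.map_add, mul_add]
        rw [Finset.sum_add_distrib]
      map_smul' := fun a x => by
        simp only [Algebra.smul_def, RingHom.id_apply]
        rw [Finset.mul_sum]
        refine Finset.sum_congr rfl fun j _ => ?_
        rw [hKlin j a x]
        ring }
  have hbasis : ∀ r, ℓ (b r) = 0 := by
    intro r
    have := congr_fun hcc r
    simp only [Matrix.mulVec, dotProduct, Matrix.transpose_apply, Matrix.of_apply,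
      Pi.zero_apply] at this
    simpa [ℓ, mul_comm] using this
  have hzero : ℓ = 0 := b.ext fun r => by rw [hbasis r]; simp
  have hall : ∀ x : L, ∑ j, c j * σ j x = 0 := fun x => by
    have := LinearMap.congr_fun hzero x
    simpa [ℓ] using this
  let F : Fin s → (Lˣ →* L) := fun j => (σ j).toMonoidHom.comp (Units.coeHom L)
  have hFinj : Function.Injective F := by
    have key : ∀ j j' : Fin s, (j : ℕ) < (j' : ℕ) → F j ≠ F j' := by
      intro j j' hlt heq
      letI : DecidableEq L := Classical.decEq L
      letI : Fintype Lˣ := Fintype.ofFinite _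
      obtain ⟨g, hg⟩ := IsCyclic.exists_generator (α := Lˣ)
      have horder : orderOf g = Nat.card Lˣ := orderOf_eq_card_of_forall_mem_zpowers hg
      have hcardu : Nat.card Lˣ = q ^ s - 1 := by
        rw [Nat.card_units, Nat.card_eq_fintype_card, hLcard]
      have hgg : (g : L) ^ q ^ (j : ℕ) = (g : L) ^ q ^ (j' : ℕ) := by
        have := DFunLike.congr_fun heq g
        simpa [F, hσ] using this
      have hgu : g ^ q ^ (j : ℕ) = g ^ q ^ (j' : ℕ) := by
        ext
        push_cast
        exact hgg
      have hmod : q ^ (j : ℕ) ≡ q ^ (j' : ℕ) [MOD orderOf g] := (pow_eq_pow_iff_modEq).mp hgu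
      have hle : q ^ (j : ℕ) ≤ q ^ (j' : ℕ) := Nat.pow_le_pow_right (by omega) hlt.le
      have hdvd : orderOf g ∣ q ^ (j' : ℕ) - q ^ (j : ℕ) := (Nat.modEq_iff_dvd' hle).mp hmod
      have e1 : q ^ (j' : ℕ) ≤ q ^ (s - 1) := Nat.pow_le_pow_right (by omega) (by omega)
      have e2 : q ^ (s - 1) < q ^ s := Nat.pow_lt_pow_right hq2 (by omega)
      have e3 : 1 ≤ q ^ (j : ℕ) := Nat.one_le_pow _ _ (by omega)
      have e4 : q ^ (j : ℕ) < q ^ (j' : ℕ) := Nat.pow_lt_pow_right hq2 hlt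
      have e5 := Nat.le_of_dvd (by omega) hdvd
      rw [horder, hcardu] at e5
      omega
    intro j j' h
    by_contra hne
    rcases lt_trichotomy (j : ℕ) (j' : ℕ) with hlt | heq | hgt
    · exact key j j' hlt h
    · exact hne (Fin.ext heq)
    · exact key j' j hgt h.symm
  have hli := (linearIndependent_monoidHom Lˣ L).comp F hFinj
  have hzero2 : ∑ j, c j • (fun u : Lˣ => F j u) = 0 := by
    funext u
    simp only [Finset.sum_apply, Pi.smul_apply, smul_eq_mul, Pi.zero_apply]
    exact hall u
  have := Fintype.linearIndependent_iff.mp hli c hzero2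
  exact hc0 (funext this)

lemma aux_shift_sum (g : ℕ → ℕ) {m : ℕ} (hm : 0 < m) :
    ∑ j ∈ Finset.range m, g ((j + 1) % m) = ∑ r ∈ Finset.range m, g r := by
  refine Finset.sum_nbij' (fun j => (j + 1) % m) (fun r => (r + (m - 1)) % m)
    (fun a ha => Finset.mem_range.mpr (Nat.mod_lt _ hm))
    (fun a ha => Finset.mem_range.mpr (Nat.mod_lt _ hm)) ?_ ?_ (fun a ha => rfl)
  · intro a ha
    rw [Finset.mem_range] at ha
    show ((a + 1) % m + (m - 1)) % m = a
    rw [Nat.mod_add_mod, show a + 1 + (m - 1) = a + m by omega, Nat.add_mod_right,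
      Nat.mod_eq_of_lt ha]
  · intro a ha
    rw [Finset.mem_range] at ha
    show ((a + (m - 1)) % m + 1) % m = a
    rw [Nat.mod_add_mod, show a + (m - 1) + 1 = a + m by omega, Nat.add_mod_right,
      Nat.mod_eq_of_lt ha]

lemma aux_period_sum (g : ℕ → ℕ) {m : ℕ} (hm : 0 < m) (c : ℕ) :
    ∑ j ∈ Finset.range (c * m), g ((j + 1) % m) = c * ∑ r ∈ Finset.range m, g r := by
  induction c with
  | zero => simp
  | succ c ih =>
    rw [Nat.succ_mul, Finset.sum_range_add, ih]
    have hsecond : ∑ j ∈ Finset.range m, g ((c * m + j + 1) % m) =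
        ∑ j ∈ Finset.range m, g ((j + 1) % m) := by
      refine Finset.sum_congr rfl fun j hj => ?_
      congr 1
      rw [show c * m + j + 1 = j + 1 + c * m by ring, Nat.add_mul_mod_self_right]
    rw [hsecond, aux_shift_sum g hm]
    ring

lemma aux_total_sum (g : ℕ → ℕ) {m s : ℕ} (hm : 0 < m) (hs : 0 < s) (hdvd : m ∣ s) :
    ∑ j ∈ Finset.range s, g ((s - j) % m) = (s / m) * ∑ r ∈ Finset.range m, g r := by
  have h1 : ∑ j ∈ Finset.range s, g ((s - (s - 1 - j)) % m)
      = ∑ j ∈ Finset.range s, g ((s - j) % m) :=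
    Finset.sum_range_reflect (fun j => g ((s - j) % m)) s
  rw [← h1]
  have h2 : ∑ j ∈ Finset.range s, g ((s - (s - 1 - j)) % m)
      = ∑ j ∈ Finset.range s, g ((j + 1) % m) := by
    refine Finset.sum_congr rfl fun j hj => ?_
    rw [Finset.mem_range] at hj
    congr 2
    omega
  rw [h2]
  obtain ⟨c, rfl⟩ := hdvd
  rw [Nat.mul_div_cancel_left c hm]
  rw [mul_comm m c]
  exact aux_period_sum g hm c

/-- The regular representation `φ : F_{q^s} → M_s(F_q)` with respect to an
`F_q`-basis `b` of `F_{q^s}`. -/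
noncomputable def phi {K L : Type*} [Field K] [Field L] [Algebra K L] {s : ℕ}
    (b : Basis (Fin s) K L) (α : L) : Matrix (Fin s) (Fin s) K :=
  LinearMap.toMatrix b b (LinearMap.mulLeft K α)

/-- `φ̄ : Mₙ(F_{q^s}) → M_{ns}(F_q)` sends `A = (a_{ij})` to the `n × n` block
matrix whose `(i,j)` block is `φ(a_{ij})`. -/
noncomputable def phibar {K L : Type*} [Field K] [Field L] [Algebra K L] {s n : ℕ}
    (b : Basis (Fin s) K L) (A : Matrix (Fin n) (Fin n) L) :
    Matrix (Fin n × Fin s) (Fin n × Fin s) K :=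
  fun p r => phi b (A p.1 r.1) p.2 r.2

/-- Let `m` be a positive divisor of `s`, let `α₁, …, α_k ∈ F_{q^s}`
satisfy `αᵢ^{qᵐ} = αᵢ` (so each `αᵢ` lies in the subfield of order `qᵐ`), and let
`A₁, …, A_k ∈ Mₙ(F_{q^s})`.  Then
`rank(Σᵢ αᵢ·φ̄(Aᵢ)) = (s/m) · Σ_{j=0}^{m−1} rank(Σᵢ αᵢ^{qʲ}·Aᵢ)`,
where `φ̄(Aᵢ)` is viewed over `F_{q^s}` via `F_q ⊆ F_{q^s}` and all ranks are taken
over `F_{q^s}`. -/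
theorem rank_phibar_sum_of_subfield_coeffs (q s n k m : ℕ) (hq : IsPrimePow q)
    (hs : 1 ≤ s) (hn : 1 ≤ n) (hk : 1 ≤ k) (hm : 1 ≤ m) (hdvd : m ∣ s)
    (K L : Type*) [Field K] [Fintype K] [Field L] [Fintype L] [Algebra K L]
    (hKcard : Fintype.card K = q) (hLcard : Fintype.card L = q ^ s)
    (b : Basis (Fin s) K L) (α : Fin k → L) (hα : ∀ i, α i ^ q ^ m = α i)
    (A : Fin k → Matrix (Fin n) (Fin n) L) :
    (∑ i, α i • (phibar b (A i)).map (algebraMap K L)).rank =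
      (s / m) * ∑ j : Fin m, (∑ i, (α i ^ q ^ (j : ℕ)) • A i).rank := by
  classical
  -- characteristic setup
  obtain ⟨p, f, hp, hf, hpf⟩ := hq
  have hpp : p.Prime := Nat.prime_iff.mpr hp
  haveI : Fact p.Prime := ⟨hpp⟩
  obtain ⟨nn, hr, hcardK⟩ := FiniteField.card K (ringChar K)
  have hrp : ringChar K = p := by
    have hd : p ∣ ringChar K ^ (nn : ℕ) := by
      rw [← hcardK, hKcard, ← hpf]
      exact dvd_pow_self p hf.ne'
    have := hpp.dvd_of_dvd_pow hd
    exact ((Nat.prime_dvd_prime_iff_eq hpp hr).mp this).symm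
  haveI hKchar : CharP K p := hrp ▸ ringChar.charP K
  haveI hLchar : CharP L p := charP_of_injective_ringHom (algebraMap K L).injective p
  -- the Frobenius maps
  set σ : ℕ → (L →+* L) := fun t => iterateFrobenius L p (f * t) with hσdef
  have hσ : ∀ t (x : L), σ t x = x ^ q ^ t := by
    intro t x
    rw [hσdef]
    simp only [iterateFrobenius_def]
    rw [pow_mul, hpf]
  have hqK : Fintype.card K = q := hKcard
  have hq2 : 1 < q := by rw [← hqK]; exact Fintype.one_lt_card
  -- the Moore matrix
  set P : Matrix (Fin s) (Fin s) L := Matrix.of (fun j r : Fin s => σ j (b r)) with hPdef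
  have hP : IsUnit P.det := by
    refine aux_moore_det hs b (fun j : Fin s => σ (j : ℕ)) (fun j x => ?_) (by rw [hLcard, hqK])
    rw [hσ, hqK]
  set Q : Matrix (Fin n × Fin s) (Fin n × Fin s) L :=
    (1 : Matrix (Fin n) (Fin n) L) ⊗ₖ P with hQdef
  have hQ : IsUnit Q.det := by
    rw [hQdef, Matrix.det_kronecker, Matrix.det_one, one_pow, one_mul]
    exact hP.pow _
  set S : Matrix (Fin n × Fin s) (Fin n × Fin s) L :=
    ∑ i, α i • (phibar b (A i)).map (algebraMap K L) with hSdef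
  set N : Fin s → Matrix (Fin n) (Fin n) L :=
    fun j => Matrix.of fun x y => ∑ i, α i * σ (j : ℕ) (A i x y) with hNdef
  -- σ is algebraMap-semilinear on K
  have halg : ∀ (t : ℕ) (cc : K), σ t (algebraMap K L cc) = algebraMap K L cc := by
    intro t cc
    rw [hσ, ← _root_.map_pow, ← hqK, FiniteField.pow_card_pow]
  -- key scalar identity
  have hphi : ∀ (a : L) (j r : Fin s),
      σ (j : ℕ) (a * b r) = ∑ pp, algebraMap K L (phi b a pp r) * σ (j : ℕ) (b pp) := by
    intro a j r
    have hrepr : a * b r = ∑ pp, phi b a pp r • b pp := by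
      have h := b.sum_repr (a * b r)
      rw [← h]
      refine Finset.sum_congr rfl fun pp _ => ?_
      congr 1
      simp [phi, LinearMap.toMatrix_apply, LinearMap.mulLeft_apply]
    rw [hrepr, map_sum]
    refine Finset.sum_congr rfl fun pp _ => ?_
    rw [Algebra.smul_def, _root_.map_mul, halg]
  -- the conjugation identity
  have key1 : Q * S = blockDiagonal N * Q := by
    ext ⟨x, j⟩ ⟨y, r⟩
    rw [Matrix.mul_apply, Matrix.mul_apply]
    rw [Fintype.sum_prod_type, Fintype.sum_prod_type]
    have hSentry : ∀ (z : Fin n) (pp : Fin s), S (z, pp) (y, r)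
        = ∑ i, α i * algebraMap K L (phi b (A i z y) pp r) := by
      intro z pp
      rw [hSdef]
      simp [Matrix.sum_apply, Matrix.map_apply, phibar, mul_comm]
    have hLHS : ∑ z : Fin n, ∑ pp : Fin s, Q (x, j) (z, pp) * S (z, pp) (y, r)
        = N j x y * P j r := by
      have hQ1 : ∀ (z : Fin n) (pp : Fin s), Q (x, j) (z, pp)
          = (if x = z then 1 else 0) * P j pp := by
        intro z pp
        rw [hQdef]
        simp [Matrix.kroneckerMap_apply, Matrix.one_apply]
      calc ∑ z : Fin n, ∑ pp : Fin s, Q (x, j) (z, pp) * S (z, pp) (y, r)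
          = ∑ z : Fin n, if x = z then (∑ pp : Fin s, P j pp * S (z, pp) (y, r)) else 0 := by
            refine Finset.sum_congr rfl fun z _ => ?_
            split_ifs with h
            · refine Finset.sum_congr rfl fun pp _ => ?_
              rw [hQ1, if_pos h, one_mul]
            · refine Finset.sum_eq_zero fun pp _ => ?_
              rw [hQ1, if_neg h, zero_mul, zero_mul]
        _ = ∑ pp : Fin s, P j pp * S (x, pp) (y, r) := by
            rw [Finset.sum_ite_eq, if_pos (Finset.mem_univ x)]
        _ = ∑ pp : Fin s, ∑ i, P j pp * (α i * algebraMap K L (phi b (A i x y) pp r)) := by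
            refine Finset.sum_congr rfl fun pp _ => ?_
            rw [hSentry, Finset.mul_sum]
        _ = ∑ i, ∑ pp : Fin s, P j pp * (α i * algebraMap K L (phi b (A i x y) pp r)) :=
            Finset.sum_comm
        _ = ∑ i, α i * (σ (j : ℕ) (A i x y * b r)) := by
            refine Finset.sum_congr rfl fun i _ => ?_
            rw [hphi (A i x y) j r, Finset.mul_sum]
            refine Finset.sum_congr rfl fun pp _ => ?_
            rw [hPdef]
            simp only [Matrix.of_apply]
            ring
        _ = ∑ i, α i * (σ (j : ℕ) (A i x y) * σ (j : ℕ) (b r)) := by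
            refine Finset.sum_congr rfl fun i _ => ?_
            rw [_root_.map_mul]
        _ = N j x y * P j r := by
            rw [hNdef, hPdef]
            simp only [Matrix.of_apply]
            rw [Finset.sum_mul]
            refine Finset.sum_congr rfl fun i _ => ?_
            ring
    have hRHS : ∑ z : Fin n, ∑ pp : Fin s, blockDiagonal N (x, j) (z, pp) * Q (z, pp) (y, r)
        = N j x y * P j r := by
      have hstep : ∀ z : Fin n, ∑ pp : Fin s, blockDiagonal N (x, j) (z, pp) * Q (z, pp) (y, r)
          = N j x z * Q (z, j) (y, r) := by
        intro z
        rw [show (∑ pp : Fin s, blockDiagonal N (x, j) (z, pp) * Q (z, pp) (y, r)) =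
          ∑ pp : Fin s, if j = pp then N j x z * Q (z, pp) (y, r) else 0 from
          Finset.sum_congr rfl fun pp _ => by
            rw [Matrix.blockDiagonal_apply]
            split_ifs with h
            · subst h; rfl
            · rw [zero_mul]]
        rw [Finset.sum_ite_eq, if_pos (Finset.mem_univ j)]
      have hQ2 : ∀ z : Fin n, Q (z, j) (y, r) = (if z = y then 1 else 0) * P j r := by
        intro z
        rw [hQdef]
        simp [Matrix.kroneckerMap_apply, Matrix.one_apply]
      calc ∑ z : Fin n, ∑ pp : Fin s, blockDiagonal N (x, j) (z, pp) * Q (z, pp) (y, r)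
          = ∑ z : Fin n, N j x z * Q (z, j) (y, r) :=
            Finset.sum_congr rfl fun z _ => hstep z
        _ = ∑ z : Fin n, if z = y then N j x z * P j r else 0 := by
            refine Finset.sum_congr rfl fun z _ => ?_
            rw [hQ2]
            split_ifs with h
            · ring
            · rw [zero_mul, mul_zero]
        _ = N j x y * P j r := by rw [Finset.sum_ite_eq', if_pos (Finset.mem_univ y)]
    rw [hLHS, hRHS]
  -- ranks under conjugation
  have key2 : S.rank = (blockDiagonal N).rank := by
    calc S.rank = (Q * S).rank := (Matrix.rank_mul_eq_right_of_isUnit_det Q S hQ).symm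
      _ = (blockDiagonal N * Q).rank := by rw [key1]
      _ = (blockDiagonal N).rank := Matrix.rank_mul_eq_left_of_isUnit_det Q (blockDiagonal N) hQ
  -- periodicity of the coefficients
  have hαmod : ∀ (i : Fin k) (t : ℕ), α i ^ q ^ t = α i ^ q ^ (t % m) := by
    intro i t
    have step : ∀ c r : ℕ, α i ^ q ^ (c * m + r) = α i ^ q ^ r := by
      intro c r
      induction c with
      | zero => simp
      | succ c ih =>
        have h1 : (c + 1) * m + r = (c * m + r) + m := by ring
        calc α i ^ q ^ ((c + 1) * m + r) = (α i ^ q ^ m) ^ q ^ (c * m + r) := by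
              rw [← pow_mul, ← pow_add, h1, add_comm (c * m + r) m]
          _ = α i ^ q ^ (c * m + r) := by rw [hα]
          _ = α i ^ q ^ r := ih
    have h2 := step (t / m) (t % m)
    rwa [Nat.div_add_mod'] at h2
  -- rank of the blocks
  have hσbij : ∀ t : ℕ, Function.Bijective (σ t) := fun t =>
    Finite.injective_iff_bijective.mp (σ t).injective
  have hrankN : ∀ j : Fin s,
      (N j).rank = (∑ i, (α i ^ q ^ ((s - (j : ℕ)) % m)) • A i).rank := by
    intro j
    have hNj : N j = ((∑ i, (α i ^ q ^ ((s - (j : ℕ)) % m)) • A i)).map (σ (j : ℕ)) := by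
      ext x y
      simp only [hNdef, Matrix.map_apply, Matrix.sum_apply, Matrix.smul_apply, smul_eq_mul,
        map_sum, _root_.map_mul, Matrix.of_apply]
      refine Finset.sum_congr rfl fun i _ => ?_
      congr 1
      rw [hσ, ← pow_mul, ← pow_add, hαmod]
      have hmod0 : (((s - (j : ℕ)) % m) + (j : ℕ)) % m = 0 := by
        have hjs : (j : ℕ) < s := j.isLt
        rw [Nat.mod_add_mod, show (s - (j : ℕ)) + (j : ℕ) = s by omega]
        obtain ⟨c, rfl⟩ := hdvd
        simp [Nat.mul_mod_right]
      rw [hmod0, pow_zero, pow_one]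
    rw [hNj]
    exact aux_rank_map (L := L) (RingEquiv.ofBijective (σ (j : ℕ)) (hσbij (j : ℕ))) _
  -- final combinatorial count
  calc S.rank = (blockDiagonal N).rank := key2
    _ = ∑ j : Fin s, (N j).rank := aux_rank_blockDiagonal N
    _ = ∑ j ∈ Finset.range s, (∑ i, (α i ^ q ^ ((s - j) % m)) • A i).rank := by
        rw [← Fin.sum_univ_eq_sum_range (fun t => (∑ i, (α i ^ q ^ ((s - t) % m)) • A i).rank) s]
        exact Finset.sum_congr rfl fun j _ => hrankN j
    _ = (s / m) * ∑ r ∈ Finset.range m, (∑ i, (α i ^ q ^ r) • A i).rank :=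
        aux_total_sum (fun t => (∑ i, (α i ^ q ^ t) • A i).rank) (by omega) (by omega) hdvd
    _ = (s / m) * ∑ j : Fin m, (∑ i, (α i ^ q ^ (j : ℕ)) • A i).rank := by
        rw [Fin.sum_univ_eq_sum_range (fun t => (∑ i, (α i ^ q ^ t) • A i).rank) m]
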